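/- Let P be an n×n positive definite matrix, Ψ = KCP with K = PCᵀ(CPCᵀ + R)⁻¹ for some m×n matrix C and positive definite R. Then for every γ ∈ [0,1], det(P − γΨ) ≤ det(P), i.e., the EKF-BPOD posterior covariance never has larger determinant than the prior. -/

import Mathlib

open Matrix


-- scalar multiple of a psd matrix by a nonneg scalar is psd
lemma aux_psd_smul {n : ℕ} {A : Matrix (Fin n) (Fin n) ℝ} (hA : A.PosSemidef)
    {c : ℝ} (hc : 0 ≤ c) : (c • A).PosSemidef := by
  have hAt : Aᵀ = A := by
    simpa [conjTranspose_eq_transpose_of_trivial] using hA.1.eq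
  refine ⟨?_, fun x => ?_⟩
  · simp [IsHermitian, conjTranspose_smul, conjTranspose_eq_transpose_of_trivial, hAt]
  · exact (hA.smul hc).2 x

lemma aux_psd_det_nonneg {n : ℕ} {A : Matrix (Fin n) (Fin n) ℝ} (hA : A.PosSemidef) :
    0 ≤ A.det := by
  rw [hA.1.det_eq_prod_eigenvalues]
  exact Finset.prod_nonneg fun i _ => by simpa using hA.eigenvalues_nonneg i

lemma aux_det_one_add_psd {n : ℕ} {M : Matrix (Fin n) (Fin n) ℝ} (hM : M.PosSemidef) :
    1 ≤ (1 + M).det := by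
  have hsp := hM.1.spectral_theorem
  set U : Matrix (Fin n) (Fin n) ℝ := (hM.1.eigenvectorUnitary : Matrix (Fin n) (Fin n) ℝ) with hUdef
  have hU : U * star U = 1 := mem_unitaryGroup_iff.mp (hM.1.eigenvectorUnitary).2
  have h1 : (1 : Matrix (Fin n) (Fin n) ℝ) + M
      = U * (1 + diagonal (RCLike.ofReal ∘ hM.1.eigenvalues)) * star U := by
    rw [mul_add, add_mul, mul_one, hU]
    conv_lhs => rw [hsp]
    rfl
  set D : Matrix (Fin n) (Fin n) ℝ := 1 + diagonal (RCLike.ofReal ∘ hM.1.eigenvalues) with hD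
  have hUU : U.det * (star U).det = 1 := by rw [← det_mul, hU, det_one]
  have hdet : (1 + M).det = D.det := by
    rw [h1, det_mul, det_mul]
    linear_combination D.det * hUU
  rw [hdet]
  have hDdiag : D = diagonal (fun i => 1 + hM.1.eigenvalues i) := by
    rw [hD, ← diagonal_one, diagonal_add]
    congr 1
  rw [hDdiag, det_diagonal]
  have := Finset.prod_le_prod (s := Finset.univ) (f := fun _ : Fin n => (1:ℝ))
    (g := fun i => 1 + hM.1.eigenvalues i) (fun i _ => zero_le_one)
    (fun i _ => le_add_of_nonneg_right (hM.eigenvalues_nonneg i))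
  simpa using this

open scoped MatrixOrder in
lemma aux_det_le_det_add {n : ℕ} {A B : Matrix (Fin n) (Fin n) ℝ}
    (hA : A.PosSemidef) (hB : B.PosSemidef) : A.det ≤ (A + B).det := by
  rcases eq_or_ne A.det 0 with h0 | h0
  · rw [h0]; exact aux_psd_det_nonneg (hA.add hB)
  · set Q := CFC.sqrt A with hQdef
    have hQQ : Q * Q = A := CFC.sqrt_mul_sqrt_self A hA.nonneg
    have hdetQ : IsUnit Q.det := by
      refine isUnit_iff_ne_zero.mpr fun h => h0 ?_
      rw [← hQQ, det_mul, h, mul_zero]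
    have hQsymm : Qᵀ = Q := by
      have := (CFC.sqrt_nonneg A).posSemidef.1.eq
      simpa [conjTranspose_eq_transpose_of_trivial] using this
    have hMpsd : (Q⁻¹ * B * Q⁻¹).PosSemidef := by
      have := hB.conjTranspose_mul_mul_same Q⁻¹
      simpa [conjTranspose_eq_transpose_of_trivial, transpose_nonsing_inv, hQsymm] using this
    have hAB : A + B = Q * (1 + Q⁻¹ * B * Q⁻¹) * Q := by
      rw [mul_add, add_mul, mul_one, hQQ]
      congr 1
      have : Q * (Q⁻¹ * B * Q⁻¹) * Q = (Q * Q⁻¹) * B * (Q⁻¹ * Q) := by noncomm_ring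
      rw [this, mul_nonsing_inv _ hdetQ, nonsing_inv_mul _ hdetQ, one_mul, mul_one]
    have hdetA : 0 < A.det := lt_of_le_of_ne (aux_psd_det_nonneg hA) (Ne.symm h0)
    calc A.det = A.det * 1 := (mul_one _).symm
      _ ≤ A.det * (1 + Q⁻¹ * B * Q⁻¹).det := by
          exact mul_le_mul_of_nonneg_left (aux_det_one_add_psd hMpsd) hdetA.le
      _ = (A + B).det := by
          rw [hAB, det_mul, det_mul, ← hQQ, det_mul]; ring


/-- For the Kalman gain `K = PCᵀ(CPCᵀ + R)⁻¹`, `Ψ = KCP`, and any BPOD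
`γ ∈ [0,1]`, the EKF-BPOD posterior covariance has determinant no larger than
the prior: `det (P − γΨ) ≤ det P`. -/
theorem bpod_posterior_det_le {n m : ℕ} (P : Matrix (Fin n) (Fin n) ℝ)
    (C : Matrix (Fin m) (Fin n) ℝ) (R : Matrix (Fin m) (Fin m) ℝ)
    (hP : P.PosDef) (hR : R.PosDef)
    (K : Matrix (Fin n) (Fin m) ℝ) (hK : K = P * Cᵀ * (C * P * Cᵀ + R)⁻¹)
    (Ψ : Matrix (Fin n) (Fin n) ℝ) (hΨ : Ψ = K * C * P)
    (γ : ℝ) (h0 : 0 ≤ γ) (h1 : γ ≤ 1) :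
    (P - γ • Ψ).det ≤ P.det := by
  set S : Matrix (Fin m) (Fin m) ℝ := C * P * Cᵀ + R with hSdef
  have hPsymm : Pᵀ = P := by
    simpa [conjTranspose_eq_transpose_of_trivial] using hP.1.eq
  have hS : S.PosDef := by
    have h1' : (C * P * Cᵀ).PosSemidef := by
      have := hP.posSemidef.mul_mul_conjTranspose_same C
      simpa [conjTranspose_eq_transpose_of_trivial] using this
    exact Matrix.PosDef.posSemidef_add h1' hR
  have hSdetU : IsUnit S.det := hS.det_pos.ne'.isUnit
  have hSsymm : Sᵀ = S := by
    simpa [conjTranspose_eq_transpose_of_trivial] using hS.1.eq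
  have hSinv : S⁻¹.PosDef := hS.inv
  have hSinvsymm : (S⁻¹)ᵀ = S⁻¹ := by rw [transpose_nonsing_inv, hSsymm]
  have hKt : Kᵀ = S⁻¹ * (C * P) := by
    rw [hK, transpose_mul, transpose_mul, transpose_transpose, hSinvsymm, hPsymm]
  have hKS : K * S = P * Cᵀ := by
    rw [hK, Matrix.mul_assoc, nonsing_inv_mul _ hSdetU, Matrix.mul_one]
  have hΨeq : Ψ = P * Cᵀ * (S⁻¹ * (C * P)) := by
    rw [hΨ, hK]; simp only [Matrix.mul_assoc]
  have hΨpsd : Ψ.PosSemidef := by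
    have := hSinv.posSemidef.conjTranspose_mul_mul_same (C * P)
    have heq : (C * P)ᴴ * S⁻¹ * (C * P) = Ψ := by
      rw [conjTranspose_eq_transpose_of_trivial, transpose_mul, hPsymm, hΨeq]
      simp only [Matrix.mul_assoc]
    rwa [heq] at this
  -- Joseph form: P - Ψ = (1 - K*C) * P * (1 - K*C)ᵀ + K * R * Kᵀ
  have hJoseph : P - Ψ = (1 - K * C) * P * (1 - K * C)ᵀ + K * R * Kᵀ := by
    have e1 : (1 - K * C)ᵀ = 1 - Cᵀ * Kᵀ := by
      rw [transpose_sub, transpose_one, transpose_mul]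
    have expand : (1 - K * C) * P * (1 - K * C)ᵀ + K * R * Kᵀ
        = P - K * (C * P) - P * (Cᵀ * Kᵀ) + (K * (C * (P * (Cᵀ * Kᵀ))) + K * (R * Kᵀ)) := by
      rw [e1]
      simp only [Matrix.mul_sub, Matrix.sub_mul, Matrix.mul_one, Matrix.one_mul, Matrix.mul_assoc]
      abel
    have e2 : K * (C * (P * (Cᵀ * Kᵀ))) + K * (R * Kᵀ) = K * S * Kᵀ := by
      rw [hSdef]
      simp only [Matrix.mul_add, Matrix.add_mul, Matrix.mul_assoc]
    have e3 : K * S * Kᵀ = Ψ := by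
      rw [hKS, hKt, hΨeq]
    have e4 : P * (Cᵀ * Kᵀ) = Ψ := by
      rw [hKt, hΨeq]; simp only [Matrix.mul_assoc]
    have e5 : K * (C * P) = Ψ := by rw [hΨ, Matrix.mul_assoc]
    rw [expand, e2, e3, e4, e5]
    abel
  have hPΨ : (P - Ψ).PosSemidef := by
    rw [hJoseph]
    have ha : ((1 - K * C) * P * (1 - K * C)ᵀ).PosSemidef := by
      have := hP.posSemidef.mul_mul_conjTranspose_same (1 - K * C)
      simpa [conjTranspose_eq_transpose_of_trivial] using this
    have hb : (K * R * Kᵀ).PosSemidef := by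
      have := hR.posSemidef.mul_mul_conjTranspose_same K
      simpa [conjTranspose_eq_transpose_of_trivial] using this
    exact ha.add hb
  have hA : (P - γ • Ψ).PosSemidef := by
    have heq : P - γ • Ψ = (P - Ψ) + (1 - γ) • Ψ := by module
    rw [heq]
    exact hPΨ.add (aux_psd_smul hΨpsd (by linarith))
  have hB : (γ • Ψ).PosSemidef := aux_psd_smul hΨpsd h0
  have hfinal : P = (P - γ • Ψ) + γ • Ψ := by abel
  calc (P - γ • Ψ).det ≤ ((P - γ • Ψ) + γ • Ψ).det := aux_det_le_det_add hA hB
    _ = P.det := by rw [← hfinal]
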